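/- (Correctness of the anonymous bit transmission protocol.) Let n ≥ 1, let s ∈ Fin n be the sender, and let m ∈ {0,1} be the bit to transmit. Let ψ = ψ_W if m = 0 and ψ = X_{{s}} ψ_W if m = 1. Then every bitstring x with ψ(x) ≠ 0 has Hamming weight k satisfying k ≡ 1 + m (mod 2); hence the bit is correctly decoded from the total number k of 1's among the broadcast outcomes as m = 0 when k is odd and m = 1 when k is even. -/

import Mathlib

/-- Hamming weight of a bitstring. -/
def hammingWt {n : ℕ} (x : Fin n → ZMod 2) : ℕ :=
  (Finset.univ.filter fun i => x i = 1).card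

/-- The `n`-qubit W state: amplitude `1/√n` on each Hamming-weight-1 bitstring. -/
noncomputable def wState (n : ℕ) : EuclideanSpace ℂ (Fin n → ZMod 2) :=
  WithLp.toLp 2 fun x => if hammingWt x = 1 then ((1 / Real.sqrt n : ℝ) : ℂ) else 0

/-- Indicator bitstring of a set of qubits. -/
def chi {n : ℕ} (S : Finset (Fin n)) : Fin n → ZMod 2 :=
  fun i => if i ∈ S then 1 else 0

/-- Pauli-X flip on the qubits in `S`. -/
noncomputable def pauliX {n : ℕ} (S : Finset (Fin n))
    (ψ : EuclideanSpace ℂ (Fin n → ZMod 2)) : EuclideanSpace ℂ (Fin n → ZMod 2) :=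
  WithLp.toLp 2 fun x => ψ (x + chi S)

/-- Bitstring with a single 1 in position `i`. -/
def eVec {n : ℕ} (i : Fin n) : Fin n → ZMod 2 :=
  fun j => if j = i then 1 else 0

lemma hammingWt_cast {n : ℕ} (x : Fin n → ZMod 2) :
    (hammingWt x : ZMod 2) = ∑ i, x i := by
  rw [hammingWt, Finset.card_eq_sum_ones, Nat.cast_sum]
  rw [Finset.sum_filter]
  congr 1; ext i
  have : x i = 0 ∨ x i = 1 := by generalize x i = a; revert a; decide
  rcases this with h | h <;> simp [h]

lemma wState_ne_zero {n : ℕ} {x : Fin n → ZMod 2} (h : wState n x ≠ 0) :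
    hammingWt x = 1 := by
  by_contra hc
  simp [wState, hc] at h

theorem stmt6 (n : ℕ) (hn : 1 ≤ n) (s : Fin n) (m : ℕ) (hm : m ≤ 1) :
    ∀ x : Fin n → ZMod 2,
      (if m = 0 then wState n else pauliX {s} (wState n)) x ≠ 0 →
      hammingWt x ≡ 1 + m [MOD 2] ∧
      (Odd (hammingWt x) → m = 0) ∧ (Even (hammingWt x) → m = 1) := by
  intro x hx
  interval_cases m
  · simp only [if_pos rfl] at hx
    have h1 := wState_ne_zero hx
    rw [h1]
    refine ⟨rfl, fun _ => rfl, fun h => ?_⟩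
    exact absurd h (by decide)
  · simp only [if_neg one_ne_zero] at hx
    have h1 := wState_ne_zero (n := n) (x := x + chi {s}) hx
    have hc : (hammingWt x : ZMod 2) = 0 := by
      have h2 : (hammingWt (x + chi {s}) : ZMod 2) = 1 := by rw [h1]; norm_num
      rw [hammingWt_cast] at h2 ⊢
      have : ∑ i, (x + chi {s}) i = (∑ i, x i) + ∑ i, chi {s} i := by
        simp [Finset.sum_add_distrib]
      have hchi : ∑ i, chi ({s} : Finset (Fin n)) i = 1 := by
        simp [chi]
      rw [this, hchi] at h2
      have h3 : (∑ i, x i) + 1 = 0 + 1 := by rw [h2, zero_add]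
      exact add_right_cancel h3
    have heven : Even (hammingWt x) := by
      have := (ZMod.natCast_eq_zero_iff _ 2).mp hc
      exact even_iff_two_dvd.mpr this
    refine ⟨?_, fun ho => absurd heven (Nat.not_even_iff_odd.mpr ho), fun _ => rfl⟩
    have h4 := (ZMod.natCast_eq_zero_iff _ 2).mp hc
    obtain ⟨k, hk⟩ := h4
    simp [Nat.ModEq]; omega
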